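/- For fixed λ > 0, the function SNR ↦ PIF(SNR, λ) = (λ/SNR)^{3/2}(√(1 + 2·SNR/λ) − 1)²/√2 is strictly increasing on (0, (3/2)λ) and strictly decreasing on ((3/2)λ, ∞). -/

import Mathlib

open Real

private lemma PIF_sqrt_form (lam : ℝ) (hlam : 0 < lam) (s : ℝ) (hs : 0 < s) :
    (lam / s) ^ ((3 : ℝ) / 2) * (Real.sqrt (1 + 2 * s / lam) - 1) ^ 2 / Real.sqrt 2
      = 2 * Real.sqrt ((Real.sqrt (1 + 2 * s / lam) - 1)
          / (Real.sqrt (1 + 2 * s / lam) + 1) ^ 3) := by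
  set b := Real.sqrt (1 + 2 * s / lam) with hbdef
  have hpos : (0:ℝ) ≤ 1 + 2 * s / lam := by positivity
  have hb2 : b ^ 2 = 1 + 2 * s / lam := Real.sq_sqrt hpos
  have hb1 : 1 < b := by
    rw [hbdef]
    apply Real.lt_sqrt_of_sq_lt
    have : 0 < 2 * s / lam := by positivity
    nlinarith
  have hb0 : (0:ℝ) < b + 1 := by linarith
  have hg0 : (0:ℝ) ≤ (b - 1) / (b + 1) ^ 3 := by
    apply div_nonneg (by linarith) (by positivity)
  have hls : (0:ℝ) ≤ lam / s := le_of_lt (by positivity)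
  have hL0 : (0:ℝ) ≤ (lam / s) ^ ((3 : ℝ) / 2) * (b - 1) ^ 2 / Real.sqrt 2 := by
    positivity
  have hR0 : (0:ℝ) ≤ 2 * Real.sqrt ((b - 1) / (b + 1) ^ 3) := by positivity
  have hsq : ((lam / s) ^ ((3 : ℝ) / 2) * (b - 1) ^ 2 / Real.sqrt 2) ^ 2
      = (2 * Real.sqrt ((b - 1) / (b + 1) ^ 3)) ^ 2 := by
    have h1 : ((lam / s) ^ ((3 : ℝ) / 2)) ^ 2 = (lam / s) ^ 3 := by
      rw [← Real.rpow_natCast ((lam / s) ^ ((3 : ℝ) / 2)) 2, ← Real.rpow_mul hls,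
        ← Real.rpow_natCast (lam / s) 3]
      norm_num
    have h2 : Real.sqrt ((b - 1) / (b + 1) ^ 3) ^ 2 = (b - 1) / (b + 1) ^ 3 :=
      Real.sq_sqrt hg0
    have h3 : Real.sqrt 2 ^ 2 = 2 := Real.sq_sqrt (by norm_num)
    have hsval : s = lam * (b ^ 2 - 1) / 2 := by
      field_simp at hb2
      linarith
    rw [div_pow, mul_pow, mul_pow, h1, h2, h3, hsval]
    have hbm : (0:ℝ) < b - 1 := by linarith
    have hlamne : lam ≠ 0 := ne_of_gt hlam
    have h4 : b ^ 2 - 1 = (b - 1) * (b + 1) := by ring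
    rw [h4]
    field_simp
  nlinarith [hsq, hL0, hR0]

private lemma cubic_ratio_lt {a b : ℝ} (ha1 : 1 < a) (hab : a < b) (hb2 : b < 2) :
    (a - 1) / (a + 1) ^ 3 < (b - 1) / (b + 1) ^ 3 := by
  rw [div_lt_div_iff₀ (pow_pos (by linarith) 3) (pow_pos (by linarith) 3)]
  nlinarith [mul_pos (sub_pos.mpr hab) (mul_pos (by linarith : (0:ℝ) < 2 - a) (by linarith : (0:ℝ) < b - 1)), mul_pos (sub_pos.mpr hab) (mul_pos (by linarith : (0:ℝ) < 2 - b) (by linarith : (0:ℝ) < a - 1)), sq_nonneg (a - b), mul_pos (sub_pos.mpr hab) (sub_pos.mpr hab)]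

private lemma cubic_ratio_gt {a b : ℝ} (ha2 : 2 < a) (hab : a < b) :
    (b - 1) / (b + 1) ^ 3 < (a - 1) / (a + 1) ^ 3 := by
  rw [div_lt_div_iff₀ (pow_pos (by linarith) 3) (pow_pos (by linarith) 3)]
  nlinarith [mul_pos (sub_pos.mpr hab) (mul_pos (by linarith : (0:ℝ) < a - 2) (by linarith : (0:ℝ) < b - 2)), mul_pos (sub_pos.mpr hab) (mul_pos (by linarith : (0:ℝ) < a - 2) (by linarith : (0:ℝ) < a - 2)), sq_nonneg (a - b)]

theorem PIF_unimodal_in_SNR (lam : ℝ) (hlam : 0 < lam) :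
    StrictMonoOn
      (fun SNR : ℝ =>
        (lam / SNR) ^ ((3 : ℝ) / 2) * (Real.sqrt (1 + 2 * SNR / lam) - 1) ^ 2
          / Real.sqrt 2)
      (Set.Ioo 0 (3 / 2 * lam)) ∧
    StrictAntiOn
      (fun SNR : ℝ =>
        (lam / SNR) ^ ((3 : ℝ) / 2) * (Real.sqrt (1 + 2 * SNR / lam) - 1) ^ 2
          / Real.sqrt 2)
      (Set.Ioi (3 / 2 * lam)) := by
  have hbgt1 : ∀ s : ℝ, 0 < s → 1 < Real.sqrt (1 + 2 * s / lam) := by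
    intro s hs
    apply Real.lt_sqrt_of_sq_lt
    have : 0 < 2 * s / lam := by positivity
    nlinarith
  have hbmono : ∀ x y : ℝ, 0 < x → x < y →
      Real.sqrt (1 + 2 * x / lam) < Real.sqrt (1 + 2 * y / lam) := by
    intro x y hx hxy
    apply Real.sqrt_lt_sqrt (by positivity)
    gcongr
  have hblt2 : ∀ s : ℝ, 0 < s → s < 3 / 2 * lam → Real.sqrt (1 + 2 * s / lam) < 2 := by
    intro s hs hs2
    rw [Real.sqrt_lt' (by norm_num)]
    have h : 2 * s / lam < 3 := by
      rw [div_lt_iff₀ hlam]; nlinarith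
    nlinarith
  have hbgt2 : ∀ s : ℝ, 3 / 2 * lam < s → 2 < Real.sqrt (1 + 2 * s / lam) := by
    intro s hs
    apply Real.lt_sqrt_of_sq_lt
    have : 3 < 2 * s / lam := by
      rw [lt_div_iff₀ hlam]; nlinarith
    nlinarith
  constructor
  · intro x hx y hy hxy
    simp only
    rw [PIF_sqrt_form lam hlam x hx.1, PIF_sqrt_form lam hlam y (lt_trans hx.1 hxy)]
    have hax := hbgt1 x hx.1
    have hbx := hblt2 x hx.1 hx.2
    have hby := hblt2 y (lt_trans hx.1 hxy) hy.2
    have hmono := hbmono x y hx.1 hxy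
    have h := cubic_ratio_lt hax hmono hby
    have hnn : (0:ℝ) ≤ (Real.sqrt (1 + 2 * x / lam) - 1) / (Real.sqrt (1 + 2 * x / lam) + 1) ^ 3 := by
      apply div_nonneg (by linarith) (by positivity)
    nlinarith [Real.sqrt_lt_sqrt hnn h]
  · intro x hx y hy hxy
    simp only
    have hx0 : (0:ℝ) < x := lt_trans (by positivity) hx
    rw [PIF_sqrt_form lam hlam x hx0, PIF_sqrt_form lam hlam y (lt_trans hx0 hxy)]
    have hax := hbgt2 x hx
    have hmono := hbmono x y hx0 hxy
    have h := cubic_ratio_gt hax hmono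
    have hnn : (0:ℝ) ≤ (Real.sqrt (1 + 2 * y / lam) - 1) / (Real.sqrt (1 + 2 * y / lam) + 1) ^ 3 := by
      have := hbgt1 y (lt_trans hx0 hxy)
      apply div_nonneg (by linarith) (by positivity)
    nlinarith [Real.sqrt_lt_sqrt hnn h]
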